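/- Let V, W ∈ Gr₂(n,k) and x, z, x', z' ∈ 𝔽₂ⁿ. Then |⟨V_{x,z}|W_{x',z'}⟩| = 2^{dim(V ∩ W) − k} if x − x' ∈ V + W and z − z' ∈ V^⊥ + W^⊥, and |⟨V_{x,z}|W_{x',z'}⟩| = 0 otherwise. -/

import Mathlib

open scoped Classical in
/-- The coset state `|W_{x,z}⟩ = 2^{-k/2} ∑_{u ∈ W} (-1)^{z·u} |x+u⟩` in `(ℂ²)^{⊗n}`,
identified with `EuclideanSpace ℂ (Fin n → ZMod 2)` via the computational basis. -/
noncomputable def cosetState {n : ℕ} (W : Submodule (ZMod 2) (Fin n → ZMod 2))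
    (x z : Fin n → ZMod 2) : EuclideanSpace ℂ (Fin n → ZMod 2) :=
  (((Real.sqrt 2 : ℝ) : ℂ) ^ (Module.finrank (ZMod 2) W))⁻¹ •
    ∑ u : W, ((-1 : ℂ) ^ (dotProduct z (u : Fin n → ZMod 2)).val) •
      EuclideanSpace.single (x + (u : Fin n → ZMod 2)) (1 : ℂ)

/-- The dual space `W^⊥ = {y ∈ 𝔽₂ⁿ : x·y = 0 for all x ∈ W}` with respect to the standard
bilinear form `x·y = ∑ᵢ xᵢyᵢ`. -/
def dualSpace {n : ℕ} (W : Submodule (ZMod 2) (Fin n → ZMod 2)) :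
    Submodule (ZMod 2) (Fin n → ZMod 2) where
  carrier := {y | ∀ x ∈ W, dotProduct x y = 0}
  add_mem' := by
    intro a b ha hb x hx
    simp [dotProduct_add, ha x hx, hb x hx]
  zero_mem' := by
    intro x hx
    simp
  smul_mem' := by
    intro c a ha x hx
    simp [dotProduct_smul, ha x hx]

open Module

variable {n : ℕ}

/-- dot-product pairing as a linear map to the dual. -/
noncomputable def dotDual (n : ℕ) : (Fin n → ZMod 2) →ₗ[ZMod 2] Module.Dual (ZMod 2) (Fin n → ZMod 2) where
  toFun y :=
    { toFun := fun x => dotProduct x y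
      map_add' := by intro a b; simp [add_dotProduct]
      map_smul' := by intro c a; simp [smul_dotProduct] }
  map_add' := by intro a b; ext x; simp [dotProduct_add]
  map_smul' := by intro c a; ext x; simp [dotProduct_smul, mul_comm]

lemma dotDual_bijective : Function.Bijective (dotDual n) := by
  have hinj : Function.Injective (dotDual n) := by
    rw [← LinearMap.ker_eq_bot]
    ext y
    simp only [LinearMap.mem_ker, Submodule.mem_bot]
    constructor
    · intro h
      funext i
      have := congrFun (congrArg DFunLike.coe h) (Pi.single i 1)
      simpa [dotDual, single_dotProduct] using this
    · rintro rfl; exact map_zero _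
  refine ⟨hinj, ?_⟩
  have := (LinearMap.injective_iff_surjective_of_finrank_eq_finrank
    (f := dotDual n) (by simp [Subspace.dual_finrank_eq])).mp hinj
  exact this

lemma mem_dualSpace {U : Submodule (ZMod 2) (Fin n → ZMod 2)} {y : Fin n → ZMod 2} :
    y ∈ dualSpace U ↔ ∀ x ∈ U, dotProduct x y = 0 := Iff.rfl

lemma dualSpace_eq_ker (U : Submodule (ZMod 2) (Fin n → ZMod 2)) :
    dualSpace U = LinearMap.ker (U.subtype.dualMap ∘ₗ dotDual n) := by
  ext y
  simp only [mem_dualSpace, LinearMap.mem_ker, LinearMap.coe_comp, Function.comp_apply]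
  constructor
  · intro h; ext u; exact h u u.2
  · intro h x hx
    exact congrFun (congrArg DFunLike.coe h) ⟨x, hx⟩

lemma finrank_dualSpace (U : Submodule (ZMod 2) (Fin n → ZMod 2)) :
    finrank (ZMod 2) (dualSpace U) + finrank (ZMod 2) U = n := by
  have hsurj : Function.Surjective (U.subtype.dualMap ∘ₗ dotDual n) := by
    exact (LinearMap.dualMap_surjective_of_injective U.injective_subtype).comp
      dotDual_bijective.2
  have h := LinearMap.finrank_range_add_finrank_ker (U.subtype.dualMap ∘ₗ dotDual n)
  rw [LinearMap.range_eq_top.mpr hsurj, finrank_top] at h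
  rw [dualSpace_eq_ker]
  rw [Subspace.dual_finrank_eq, Module.finrank_pi] at h
  simp only [Fintype.card_fin] at h
  omega

lemma dualSpace_antitone {U U' : Submodule (ZMod 2) (Fin n → ZMod 2)} (h : U ≤ U') :
    dualSpace U' ≤ dualSpace U := fun y hy x hx => hy x (h hx)

lemma dualSpace_sup (V W : Submodule (ZMod 2) (Fin n → ZMod 2)) :
    dualSpace (V ⊔ W) = dualSpace V ⊓ dualSpace W := by
  apply le_antisymm
  · exact le_inf (dualSpace_antitone le_sup_left) (dualSpace_antitone le_sup_right)
  · rintro y ⟨h1, h2⟩ x hx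
    obtain ⟨a, ha, b, hb, rfl⟩ := Submodule.mem_sup.mp hx
    simp [add_dotProduct, h1 a ha, h2 b hb]

lemma dualSpace_inf (V W : Submodule (ZMod 2) (Fin n → ZMod 2)) :
    dualSpace (V ⊓ W) = dualSpace V ⊔ dualSpace W := by
  have hle : dualSpace V ⊔ dualSpace W ≤ dualSpace (V ⊓ W) :=
    sup_le (dualSpace_antitone inf_le_left) (dualSpace_antitone inf_le_right)
  refine (Submodule.eq_of_le_of_finrank_le hle ?_).symm
  have h1 := Submodule.finrank_sup_add_finrank_inf_eq (dualSpace V) (dualSpace W)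
  have h2 : dualSpace V ⊓ dualSpace W = dualSpace (V ⊔ W) := (dualSpace_sup V W).symm
  rw [h2] at h1
  have h3 := finrank_dualSpace V
  have h4 := finrank_dualSpace W
  have h5 := finrank_dualSpace (V ⊔ W)
  have h6 := finrank_dualSpace (V ⊓ W)
  have h7 := Submodule.finrank_sup_add_finrank_inf_eq V W
  omega

lemma zmod2_cases (a : ZMod 2) : a = 0 ∨ a = 1 := by revert a; decide

lemma neg_one_pow_val_add (a b : ZMod 2) :
    ((-1:ℂ)) ^ (a + b).val = (-1) ^ a.val * (-1) ^ b.val := by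
  have h0 : (0 : ZMod 2).val = 0 := rfl
  have h1 : (1 : ZMod 2).val = 1 := rfl
  have h11 : ((1 : ZMod 2) + 1) = 0 := by decide
  rcases zmod2_cases a with rfl | rfl <;> rcases zmod2_cases b with rfl | rfl <;>
    simp [h0, h1, h11]

open scoped Classical in
lemma char_sum {n : ℕ} (U : Submodule (ZMod 2) (Fin n → ZMod 2)) (s : Fin n → ZMod 2) :
    ∑ t : U, ((-1:ℂ) ^ (dotProduct s (t : Fin n → ZMod 2)).val) =
      if s ∈ dualSpace U then (2:ℂ) ^ Module.finrank (ZMod 2) U else 0 := by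
  by_cases hs : s ∈ dualSpace U
  · rw [if_pos hs]
    have : ∀ t : U, ((-1:ℂ) ^ (dotProduct s (t : Fin n → ZMod 2)).val) = 1 := by
      intro t
      have := hs (t : Fin n → ZMod 2) t.2
      rw [dotProduct_comm] at this
      simp [this]
    rw [Finset.sum_congr rfl fun t _ => this t, Finset.sum_const]
    simp [card_eq_pow_finrank (K := ZMod 2) (V := U)]
  · rw [if_neg hs]
    obtain ⟨t₀, ht₀U, ht₀⟩ : ∃ t₀ ∈ U, dotProduct s t₀ = 1 := by
      simp only [mem_dualSpace, not_forall] at hs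
      obtain ⟨t₀, ht₀U, h⟩ := hs
      rw [dotProduct_comm] at h
      exact ⟨t₀, ht₀U, (zmod2_cases _).resolve_left h⟩
    set F : U → ℂ := fun t => ((-1:ℂ) ^ (dotProduct s (t : Fin n → ZMod 2)).val) with hF
    have hshift : ∑ t : U, F t = - ∑ t : U, F t := by
      conv_lhs => rw [← Equiv.sum_comp (Equiv.addRight (⟨t₀, ht₀U⟩ : U)) F]
      rw [← Finset.sum_neg_distrib]
      apply Finset.sum_congr rfl
      intro t _
      show F (t + ⟨t₀, ht₀U⟩) = - F t
      rw [hF]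
      simp only [Submodule.coe_add]
      rw [dotProduct_add, neg_one_pow_val_add, ht₀]
      have : (1 : ZMod 2).val = 1 := rfl
      rw [this]
      ring
    have h2 : (2:ℂ) * ∑ t : U, F t = 0 := by
      rw [two_mul]
      nth_rewrite 1 [hshift]
      ring
    simpa [hF] using (mul_eq_zero.mp h2).resolve_left two_ne_zero

open scoped Classical in
lemma sum_coe_eq_ite {n : ℕ} (U : Submodule (ZMod 2) (Fin n → ZMod 2))
    (g : (Fin n → ZMod 2) → ℂ) (w : Fin n → ZMod 2) :
    ∑ u : U, (if (u : Fin n → ZMod 2) = w then g u else 0) = if w ∈ U then g w else 0 := by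
  by_cases hw : w ∈ U
  · rw [if_pos hw, Finset.sum_eq_single (⟨w, hw⟩ : U)]
    · simp
    · intro b _ hb; rw [if_neg]; intro h; exact hb (Subtype.ext h)
    · simp
  · rw [if_neg hw, Finset.sum_eq_zero]
    intro u _
    rw [if_neg]; intro h; exact hw (h ▸ u.2)

open scoped Classical in
lemma sum_ite_mem_inf {n : ℕ} (A B : Submodule (ZMod 2) (Fin n → ZMod 2))
    (g : (Fin n → ZMod 2) → ℂ) :
    ∑ u : A, (if (u : Fin n → ZMod 2) ∈ B then g u else 0)
      = ∑ t : (A ⊓ B : Submodule (ZMod 2) (Fin n → ZMod 2)), g t := by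
  rw [← Finset.sum_filter]
  refine Finset.sum_bij' (fun (u : A) (hu : u ∈ Finset.univ.filter fun u : A => (u : Fin n → ZMod 2) ∈ B) =>
      (⟨u, Submodule.mem_inf.mpr ⟨u.2, (Finset.mem_filter.mp hu).2⟩⟩ :
        (A ⊓ B : Submodule (ZMod 2) (Fin n → ZMod 2))))
    (fun t _ => ⟨t, (Submodule.mem_inf.mp t.2).1⟩) ?_ ?_ ?_ ?_ ?_
  · intro a ha; simp
  · intro t ht; simp [(Submodule.mem_inf.mp t.2).2]
  · intro a ha; rfl
  · intro t ht; rfl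
  · intro a ha; rfl

open scoped Classical in
lemma inner_cosetState {n : ℕ} (V W : Submodule (ZMod 2) (Fin n → ZMod 2))
    (x z x' z' : Fin n → ZMod 2) :
    (inner ℂ (cosetState V x z) (cosetState W x' z') : ℂ) =
      ((((Real.sqrt 2 : ℝ) : ℂ)) ^ (finrank (ZMod 2) V + finrank (ZMod 2) W))⁻¹ *
      ∑ u : V, ∑ u' : W, ((-1:ℂ) ^ (dotProduct z (u : Fin n → ZMod 2)).val) *
        ((-1:ℂ) ^ (dotProduct z' (u' : Fin n → ZMod 2)).val) *
        (if (u' : Fin n → ZMod 2) = x + u - x' then 1 else 0) := by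
  simp only [cosetState, inner_smul_left, inner_smul_right, sum_inner, inner_sum,
    EuclideanSpace.inner_single_left, EuclideanSpace.single_apply, map_inv₀, map_pow,
    Complex.conj_ofReal, map_neg, map_one]
  have hcond : ∀ (a b : Fin n → ZMod 2), (x + a = x' + b) = (b = x + a - x') := by
    intro a b
    apply propext
    rw [eq_sub_iff_add_eq, add_comm b x', eq_comm]
  simp_rw [one_mul, hcond, pow_add, mul_inv, Finset.mul_sum]
  rw [Finset.sum_comm]
  apply Finset.sum_congr rfl; intro u _
  apply Finset.sum_congr rfl; intro u' _
  ring

open scoped Classical in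
lemma inner_cosetState₂ {n : ℕ} (V W : Submodule (ZMod 2) (Fin n → ZMod 2))
    (x z x' z' : Fin n → ZMod 2) :
    (inner ℂ (cosetState V x z) (cosetState W x' z') : ℂ) =
      ((((Real.sqrt 2 : ℝ) : ℂ)) ^ (finrank (ZMod 2) V + finrank (ZMod 2) W))⁻¹ *
      ∑ u : V, (if x + (u : Fin n → ZMod 2) - x' ∈ W then
          ((-1:ℂ) ^ (dotProduct z (u : Fin n → ZMod 2)).val) *
          ((-1:ℂ) ^ (dotProduct z' (x + (u : Fin n → ZMod 2) - x')).val) else 0) := by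
  rw [inner_cosetState]
  congr 1
  apply Finset.sum_congr rfl
  intro u _
  rw [← sum_coe_eq_ite W (fun w => ((-1:ℂ) ^ (dotProduct z (u : Fin n → ZMod 2)).val) *
      ((-1:ℂ) ^ (dotProduct z' w).val)) (x + (u : Fin n → ZMod 2) - x')]
  apply Finset.sum_congr rfl
  intro u' _
  by_cases h : (u' : Fin n → ZMod 2) = x + (u : Fin n → ZMod 2) - x'
  · rw [if_pos h, if_pos h, h, mul_one]
  · rw [if_neg h, if_neg h, mul_zero]

lemma zmod2_add_self (a : ZMod 2) : a + a = 0 := by revert a; decide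

lemma pi_add_self {n : ℕ} (v : Fin n → ZMod 2) : v + v = 0 :=
  funext fun i => zmod2_add_self (v i)

lemma zmod2_sub_eq_add (a b : ZMod 2) : a - b = a + b := by revert a b; decide

lemma pi_sub_eq_add {n : ℕ} (v w : Fin n → ZMod 2) : v - w = v + w :=
  funext fun i => zmod2_sub_eq_add (v i) (w i)

open scoped Classical in
lemma inner_cosetState₃ {n : ℕ} (V W : Submodule (ZMod 2) (Fin n → ZMod 2))
    (x z x' z' : Fin n → ZMod 2) (h : x - x' ∈ V ⊔ W) :
    ∃ C : ℂ, ‖C‖ = 1 ∧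
      (inner ℂ (cosetState V x z) (cosetState W x' z') : ℂ) =
        ((((Real.sqrt 2 : ℝ) : ℂ)) ^ (finrank (ZMod 2) V + finrank (ZMod 2) W))⁻¹ * C *
          (if z + z' ∈ dualSpace (V ⊓ W)
            then (2:ℂ) ^ finrank (ZMod 2) (V ⊓ W : Submodule (ZMod 2) (Fin n → ZMod 2))
            else 0) := by
  obtain ⟨v₀, hv₀, w₀, hw₀, hd⟩ := Submodule.mem_sup.mp h
  set C : ℂ := ((-1:ℂ) ^ (dotProduct z v₀).val) *
      ((-1:ℂ) ^ (dotProduct z' w₀).val) with hC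
  refine ⟨C, by simp [hC], ?_⟩
  rw [inner_cosetState₂, ← char_sum (V ⊓ W) (z + z'), mul_assoc]
  congr 1
  set F : V → ℂ := fun u => (if x + (u : Fin n → ZMod 2) - x' ∈ W then
      ((-1:ℂ) ^ (dotProduct z (u : Fin n → ZMod 2)).val) *
      ((-1:ℂ) ^ (dotProduct z' (x + (u : Fin n → ZMod 2) - x')).val) else 0) with hF
  have hsum : ∑ u : V, F u = ∑ u : V, F (u + ⟨v₀, hv₀⟩) :=
    (Equiv.sum_comp (Equiv.addRight (⟨v₀, hv₀⟩ : V)) F).symm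
  have hstep : ∀ u : V, F (u + ⟨v₀, hv₀⟩) =
      (if (u : Fin n → ZMod 2) ∈ W then
        C * (-1:ℂ) ^ (dotProduct (z + z') (u : Fin n → ZMod 2)).val else 0) := by
    intro u
    have hcoe : ((u + (⟨v₀, hv₀⟩ : V) : V) : Fin n → ZMod 2) = (u : Fin n → ZMod 2) + v₀ := rfl
    have harg : x + ((u : Fin n → ZMod 2) + v₀) - x' = (u : Fin n → ZMod 2) + w₀ := by
      calc x + ((u : Fin n → ZMod 2) + v₀) - x'
          = (u : Fin n → ZMod 2) + v₀ + (x - x') := by abel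
        _ = (u : Fin n → ZMod 2) + v₀ + (v₀ + w₀) := by rw [hd]
        _ = (u : Fin n → ZMod 2) + (v₀ + v₀) + w₀ := by abel
        _ = (u : Fin n → ZMod 2) + w₀ := by rw [pi_add_self, add_zero]
    rw [hF]
    simp only [hcoe, harg]
    by_cases hu : (u : Fin n → ZMod 2) ∈ W
    · rw [if_pos ((Submodule.add_mem_iff_left W hw₀).mpr hu), if_pos hu,
        dotProduct_add z, dotProduct_add z', neg_one_pow_val_add,
        neg_one_pow_val_add, add_dotProduct, neg_one_pow_val_add, hC]
      ring
    · rw [if_neg (fun hmem => hu ((Submodule.add_mem_iff_left W hw₀).mp hmem)), if_neg hu]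
  rw [show (∑ u : V, (if x + (u : Fin n → ZMod 2) - x' ∈ W then
      ((-1:ℂ) ^ (dotProduct z (u : Fin n → ZMod 2)).val) *
      ((-1:ℂ) ^ (dotProduct z' (x + (u : Fin n → ZMod 2) - x')).val) else 0)) = ∑ u : V, F u
      from rfl, hsum, Finset.sum_congr rfl (fun u _ => hstep u),
    sum_ite_mem_inf V W (fun w => C * (-1:ℂ) ^ (dotProduct (z + z') w).val),
    Finset.mul_sum]

/-- For `V, W ∈ Gr₂(n,k)` and `x, z, x', z' ∈ 𝔽₂ⁿ`,
`|⟨V_{x,z}|W_{x',z'}⟩| = 2^{dim(V ∩ W) - k}` if `x - x' ∈ V + W` and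
`z - z' ∈ V^⊥ + W^⊥`, and `|⟨V_{x,z}|W_{x',z'}⟩| = 0` otherwise. -/
theorem abs_inner_cosetState_cosetState {n k : ℕ}
    (V W : Submodule (ZMod 2) (Fin n → ZMod 2))
    (hV : Module.finrank (ZMod 2) V = k) (hW : Module.finrank (ZMod 2) W = k)
    (x z x' z' : Fin n → ZMod 2) :
    (x - x' ∈ V ⊔ W ∧ z - z' ∈ dualSpace V ⊔ dualSpace W →
      ‖(inner ℂ (cosetState V x z) (cosetState W x' z') : ℂ)‖ =
        (2 : ℝ) ^ ((Module.finrank (ZMod 2) ↥(V ⊓ W) : ℤ) - (k : ℤ))) ∧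
    (¬(x - x' ∈ V ⊔ W ∧ z - z' ∈ dualSpace V ⊔ dualSpace W) →
      ‖(inner ℂ (cosetState V x z) (cosetState W x' z') : ℂ)‖ = 0) := by
  classical
  have hsub : z - z' = z + z' := pi_sub_eq_add z z'
  constructor
  · rintro ⟨h1, h2⟩
    obtain ⟨C, hCnorm, hinner⟩ := inner_cosetState₃ V W x z x' z' h1
    rw [hV, hW] at hinner
    have hcond : z + z' ∈ dualSpace (V ⊓ W) := by
      rw [dualSpace_inf]; rw [hsub] at h2; exact h2
    have h2k : ((Real.sqrt 2 : ℝ) : ℂ) ^ (k + k) = ((2:ℂ)) ^ k := by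
      rw [← Complex.ofReal_pow, ← two_mul, pow_mul, Real.sq_sqrt (by norm_num : (0:ℝ) ≤ 2)]
      norm_num
    rw [hinner, if_pos hcond, h2k, norm_mul, norm_mul, hCnorm, mul_one, norm_inv, norm_pow,
      norm_pow]
    have hn2 : ‖(2:ℂ)‖ = 2 := by norm_num
    rw [hn2]
    rw [zpow_sub₀ (by norm_num : (2:ℝ) ≠ 0), zpow_natCast, zpow_natCast]
    ring
  · intro hneg
    by_cases h1 : x - x' ∈ V ⊔ W
    · have h2 : ¬ (z - z' ∈ dualSpace V ⊔ dualSpace W) := fun h2 => hneg ⟨h1, h2⟩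
      obtain ⟨C, hCnorm, hinner⟩ := inner_cosetState₃ V W x z x' z' h1
      have hcond : z + z' ∉ dualSpace (V ⊓ W) := by
        rw [dualSpace_inf, ← hsub]; exact h2
      rw [hinner, if_neg hcond, mul_zero, norm_zero]
    · have hz : ∑ u : V, (if x + (u : Fin n → ZMod 2) - x' ∈ W then
          ((-1:ℂ) ^ (dotProduct z (u : Fin n → ZMod 2)).val) *
          ((-1:ℂ) ^ (dotProduct z' (x + (u : Fin n → ZMod 2) - x')).val) else 0) = 0 := by
        apply Finset.sum_eq_zero
        intro u _
        rw [if_neg]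
        intro hw
        apply h1
        have hmem := Submodule.add_mem_sup (V.neg_mem u.2) hw
        have heq : -(u : Fin n → ZMod 2) + (x + (u : Fin n → ZMod 2) - x') = x - x' := by abel
        rwa [heq] at hmem
      rw [inner_cosetState₂, hz, mul_zero, norm_zero]
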